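/- Let Q = {u₁,...,uₙ} be a set of n ≥ 5 points on S², in general position and not contained in any closed hemisphere. Then the set X = {u_i ∈ Q : the n−1 points {u₁,...,uₙ} \ {u_i} are not contained in any closed hemisphere} has at least n − 3 elements. -/

import Mathlib

open scoped RealInnerProductSpace

noncomputable section

/-- ℝ³ as EuclideanSpace. -/
abbrev E3 : Type := EuclideanSpace ℝ (Fin 3)

/-- Determinant of the 3×3 matrix with columns u, v, w. -/
def det3 (u v w : E3) : ℝ :=
  Matrix.det !![u 0, v 0, w 0; u 1, v 1, w 1; u 2, v 2, w 2]

/-- The minimizing great-circle arc joining two non-antipodal points of S². -/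
def sphericalEdge (u v : E3) : Set E3 :=
  {p | ∃ a b : ℝ, 0 ≤ a ∧ 0 ≤ b ∧ (a ≠ 0 ∨ b ≠ 0) ∧
    p = ‖a • u + b • v‖⁻¹ • (a • u + b • v)}

/-- A spherical polygon: a cyclic sequence of distinct points of S² with consecutive
vertices non-antipodal. -/
def IsSphericalPolygon {n : ℕ} (u : ZMod n → E3) : Prop :=
  (∀ i, ‖u i‖ = 1) ∧ Function.Injective u ∧ (∀ i, u (i + 1) ≠ -(u i))

/-- The i-th edge of a spherical polygon. -/
def polyEdge {n : ℕ} (u : ZMod n → E3) (i : ZMod n) : Set E3 :=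
  sphericalEdge (u i) (u (i + 1))

/-- A spherical polygon is simple if non-adjacent edges are disjoint and adjacent
edges meet only in their common vertex. -/
def IsSimple {n : ℕ} (u : ZMod n → E3) : Prop :=
  (∀ i j : ZMod n, j ≠ i → j ≠ i + 1 → i ≠ j + 1 →
      Disjoint (polyEdge u i) (polyEdge u j)) ∧
  (∀ i : ZMod n, polyEdge u i ∩ polyEdge u (i + 1) = {u (i + 1)})

/-- A family of points of S² is balanced if it is not contained in any closed
hemisphere. -/
def IsBalanced {ι : Type*} (u : ι → E3) : Prop :=
  ∀ w : E3, w ≠ 0 → ∃ i, ⟪u i, w⟫ < 0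

/-- Points in general position: no three on a common great circle. -/
def GeneralPosition {ι : Type*} (u : ι → E3) : Prop :=
  ∀ i j k : ι, i ≠ j → i ≠ k → j ≠ k → det3 (u i) (u j) (u k) ≠ 0

/-- Spherical inflection of a spherical polygon at index i. -/
def Inflection {n : ℕ} (u : ZMod n → E3) (i : ZMod n) : Prop :=
  det3 (u (i - 1)) (u i) (u (i + 1)) * det3 (u i) (u (i + 1)) (u (i + 2)) < 0

/-- The polygon Q − uᵢ obtained by deleting the vertex uᵢ, reindexed over ZMod (n-1),
starting at u_{i+1}. -/
def eraseVertex {n : ℕ} (u : ZMod n → E3) (i : ZMod n) : ZMod (n - 1) → E3 :=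
  fun j => u (i + 1 + (j.val : ZMod n))

/-- The open cone spanned by three vectors. -/
def openCone3 (a b c : E3) : Set E3 :=
  {x | ∃ l₁ l₂ l₃ : ℝ, 0 < l₁ ∧ 0 < l₂ ∧ 0 < l₃ ∧ x = l₁ • a + l₂ • b + l₃ • c}

end

section AuxProof

open Matrix

noncomputable def colM (u v w : E3) : Matrix (Fin 3) (Fin 3) ℝ :=
  !![u 0, v 0, w 0; u 1, v 1, w 1; u 2, v 2, w 2]

lemma det3_eq_colM_det (u v w : E3) : det3 u v w = (colM u v w).det := rfl

lemma colM_mulVec_apply (u v w : E3) (c : Fin 3 → ℝ) (i : Fin 3) :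
    (colM u v w *ᵥ c) i = (c 0 • u + c 1 • v + c 2 • w) i := by
  fin_cases i <;>
    simp [colM, Matrix.mulVec, dotProduct, Matrix.vecHead, Matrix.vecTail, PiLp.add_apply, PiLp.smul_apply,
      smul_eq_mul, Fin.sum_univ_three] <;> ring

lemma det3_eq_zero_of_comb (u v w : E3) (c : Fin 3 → ℝ) (hc : c ≠ 0)
    (h : c 0 • u + c 1 • v + c 2 • w = 0) : det3 u v w = 0 := by
  rw [det3_eq_colM_det, ← Matrix.exists_mulVec_eq_zero_iff]
  refine ⟨c, hc, funext fun i => ?_⟩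
  rw [colM_mulVec_apply u v w c i, h]
  simp

lemma exists_comb_of_det3_ne_zero (u v w : E3) (h : det3 u v w ≠ 0) (x : E3) :
    ∃ c : Fin 3 → ℝ, c 0 • u + c 1 • v + c 2 • w = x := by
  have hu : IsUnit (colM u v w).det := isUnit_iff_ne_zero.mpr (by rwa [← det3_eq_colM_det])
  refine ⟨(colM u v w)⁻¹ *ᵥ (fun i => x i), ?_⟩
  have hmv : colM u v w *ᵥ ((colM u v w)⁻¹ *ᵥ fun i => x i) = fun i => x i := by
    rw [Matrix.mulVec_mulVec, Matrix.mul_nonsing_inv _ hu, Matrix.one_mulVec]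
  ext i
  rw [← colM_mulVec_apply, hmv]

lemma eq_zero_of_orth3 (u v w W : E3) (hdet : det3 u v w ≠ 0)
    (h1 : ⟪u, W⟫ = 0) (h2 : ⟪v, W⟫ = 0) (h3 : ⟪w, W⟫ = 0) : W = 0 := by
  obtain ⟨c, hc⟩ := exists_comb_of_det3_ne_zero u v w hdet W
  have h : ⟪W, W⟫ = (0:ℝ) := by
    have h' := congrArg (fun y : E3 => ⟪y, W⟫) hc
    simp only [inner_add_left, real_inner_smul_left, h1, h2, h3] at h'
    rw [← h']
    ring
  exact inner_self_eq_zero.mp h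

lemma colContra (v1 v2 v3 v4 x W : E3) (l1 l2 l3 l4 a1 a2 a3 a4 : ℝ)
    (hl1 : 0 < l1) (hl2 : 0 < l2) (hl3 : 0 < l3) (hl4 : 0 < l4)
    (h21 : a1 * l2 ≤ a2 * l1) (h31 : a1 * l3 ≤ a3 * l1) (h41 : a1 * l4 ≤ a4 * l1)
    (hA : a1 • v1 + a2 • v2 + a3 • v3 + a4 • v4 = -x)
    (hL : l1 • v1 + l2 • v2 + l3 • v3 + l4 • v4 = 0)
    (hW2 : 0 < ⟪v2, W⟫) (hW3 : 0 < ⟪v3, W⟫) (hW4 : 0 < ⟪v4, W⟫)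
    (hWx : 0 < ⟪x, W⟫) : False := by
  have e1 : a1 * ⟪v1,W⟫ + a2 * ⟪v2,W⟫ + a3 * ⟪v3,W⟫ + a4 * ⟪v4,W⟫ = -⟪x,W⟫ := by
    have h := congrArg (fun y : E3 => ⟪y, W⟫) hA
    simp only [inner_add_left, real_inner_smul_left, inner_neg_left] at h
    linarith [h]
  have e2 : l1 * ⟪v1,W⟫ + l2 * ⟪v2,W⟫ + l3 * ⟪v3,W⟫ + l4 * ⟪v4,W⟫ = 0 := by
    have h := congrArg (fun y : E3 => ⟪y, W⟫) hL
    simp only [inner_add_left, real_inner_smul_left, inner_zero_left] at h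
    linarith [h]
  have e3 : l1 * (a1 * ⟪v1,W⟫ + a2 * ⟪v2,W⟫ + a3 * ⟪v3,W⟫ + a4 * ⟪v4,W⟫) = l1 * (-⟪x,W⟫) := by
    rw [e1]
  have e4 : a1 * (l1 * ⟪v1,W⟫ + l2 * ⟪v2,W⟫ + l3 * ⟪v3,W⟫ + l4 * ⟪v4,W⟫) = 0 := by
    rw [e2, mul_zero]
  nlinarith [mul_nonneg (sub_nonneg.2 h21) hW2.le, mul_nonneg (sub_nonneg.2 h31) hW3.le,
    mul_nonneg (sub_nonneg.2 h41) hW4.le, mul_pos hl1 hWx, e3, e4]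

section Core
variable {n : ℕ}

/-- A positive convex combination of ≤ 2 of the points cannot vanish. -/
lemma coreSmall (hn : 5 ≤ n) (u : Fin n → E3) (hinj : Function.Injective u) (hsph : ∀ i, ‖u i‖ = 1)
    (hgp : GeneralPosition u)
    {ι : Type} [Fintype ι] (q : ι → Fin n) (hq : Function.Injective q)
    (w : ι → ℝ) (hw : ∀ i, 0 < w i) (hsum : ∑ i, w i • u (q i) = 0)
    (hone : ∑ i, w i = 1) (hcard : Fintype.card ι ≤ 2) : False := by
  classical
  have hne : Nonempty ι := by
    by_contra h
    rw [not_nonempty_iff] at h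
    rw [Finset.univ_eq_empty, Finset.sum_empty] at hone
    norm_num at hone
  obtain ⟨i0⟩ := hne
  by_cases hall : ∀ j : ι, j = i0
  · -- one point
    have h1 : ∑ i, w i • u (q i) = w i0 • u (q i0) := by
      rw [Fintype.sum_eq_single i0 (fun j hj => absurd (hall j) hj)]
    rw [h1] at hsum
    have : u (q i0) = 0 := by
      rcases smul_eq_zero.mp hsum with h | h
      · exact absurd h (hw i0).ne'
      · exact h
    have h5 := hsph (q i0)
    rw [this, norm_zero] at h5
    norm_num at h5
  · push_neg at hall
    obtain ⟨j0, hj0⟩ := hall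
    -- exactly two points
    have huniv : (Finset.univ : Finset ι) = {i0, j0} := by
      apply (Finset.eq_of_subset_of_card_le ?_ ?_).symm
      · intro x _; exact Finset.mem_univ x
      · calc (Finset.univ : Finset ι).card ≤ 2 := hcard
          _ = ({i0, j0} : Finset ι).card := by
            rw [Finset.card_insert_of_notMem (by simpa using (Ne.symm hj0)),
              Finset.card_singleton]
    rw [huniv, Finset.sum_pair (Ne.symm hj0)] at hsum
    -- w i0 • u (q i0) = - (w j0 • u (q j0))
    have heqn : w i0 • u (q i0) = -(w j0 • u (q j0)) := by
      rw [eq_neg_iff_add_eq_zero]; exact hsum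
    have hnorm : w i0 = w j0 := by
      have h1 : ‖w i0 • u (q i0)‖ = w i0 := by
        rw [norm_smul, hsph, Real.norm_eq_abs, abs_of_pos (hw i0), mul_one]
      have h2 : ‖w j0 • u (q j0)‖ = w j0 := by
        rw [norm_smul, hsph, Real.norm_eq_abs, abs_of_pos (hw j0), mul_one]
      rw [← h1, heqn, norm_neg, h2]
    have hanti : u (q i0) + u (q j0) = 0 := by
      have h := hsum
      rw [← hnorm, ← smul_add] at h
      exact (smul_eq_zero.mp h).resolve_left (hw i0).ne'
    -- find a third index
    have hex : ∃ k : Fin n, k ≠ q i0 ∧ k ≠ q j0 := by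
      by_contra h
      push_neg at h
      have hsub : (Finset.univ : Finset (Fin n)) ⊆ {q i0, q j0} := by
        intro k _
        rcases eq_or_ne k (q i0) with h' | h'
        · simp [h']
        · simp [h k h']
      have := Finset.card_le_card hsub
      simp only [Finset.card_univ, Fintype.card_fin] at this
      have h2 : ({q i0, q j0} : Finset (Fin n)).card ≤ 2 := by
        apply le_trans (Finset.card_insert_le _ _); simp
      omega
    obtain ⟨k, hk1, hk2⟩ := hex
    have hne' : q i0 ≠ q j0 := fun h => (Ne.symm hj0) (hq h)
    refine hgp (q i0) (q j0) k hne' (Ne.symm hk1) (Ne.symm hk2) ?_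
    apply det3_eq_zero_of_comb _ _ _ ![1, 1, 0]
    · intro h
      have := congrFun h 0
      norm_num at this
    · simpa using hanti

lemma coreW (hn : 5 ≤ n) (u : Fin n → E3) (hinj : Function.Injective u)
    (hsph : ∀ i, ‖u i‖ = 1) (hgp : GeneralPosition u)
    {ι : Type} [Fintype ι] (q : ι → Fin n) (hq : Function.Injective q)
    (w : ι → ℝ) (hw : ∀ i, 0 < w i) (hsum : ∑ i, w i • u (q i) = 0)
    (hone : ∑ i, w i = 1) (W : E3) (hW0 : W ≠ 0)
    (hWnn : ∀ i, 0 ≤ ⟪u (q i), W⟫) : False := by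
  classical
  by_cases hcard : Fintype.card ι ≤ 2
  · exact coreSmall hn u hinj hsph hgp q hq w hw hsum hone hcard
  push_neg at hcard
  -- each inner product vanishes
  have hz : ∀ i : ι, ⟪u (q i), W⟫ = 0 := by
    have hs : ∑ i, w i * ⟪u (q i), W⟫ = 0 := by
      have h := congrArg (fun y : E3 => ⟪y, W⟫) hsum
      simp only [sum_inner, real_inner_smul_left, inner_zero_left] at h
      exact h
    have h := (Finset.sum_eq_zero_iff_of_nonneg
      (fun i _ => mul_nonneg (hw i).le (hWnn i))).mp hs
    intro i
    have := h i (Finset.mem_univ i)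
    rcases mul_eq_zero.mp this with h' | h'
    · exact absurd h' (hw i).ne'
    · exact h'
  -- pick three distinct elements
  have h3 : 3 ≤ (Finset.univ : Finset ι).card := by
    rw [Finset.card_univ]; omega
  obtain ⟨i1, hi1⟩ := Finset.card_pos.mp (by omega : 0 < (Finset.univ : Finset ι).card)
  have h2 : 1 < (Finset.univ.erase i1).card := by
    have := Finset.card_erase_of_mem hi1
    omega
  obtain ⟨i2, hi2, i3, hi3, h23⟩ := Finset.one_lt_card.mp h2
  have h21 : i2 ≠ i1 := (Finset.mem_erase.mp hi2).1
  have h31 : i3 ≠ i1 := (Finset.mem_erase.mp hi3).1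
  have hdet : det3 (u (q i1)) (u (q i2)) (u (q i3)) ≠ 0 :=
    hgp _ _ _ (fun h => h21 (hq h).symm) (fun h => h31 (hq h).symm)
      (fun h => h23 (hq h))
  exact hW0 (eq_zero_of_orth3 _ _ _ _ hdet (hz i1) (hz i2) (hz i3))

lemma zero_mem_hull (hn : 5 ≤ n) (u : Fin n → E3) (hbal : IsBalanced u) :
    (0 : E3) ∈ convexHull ℝ (Set.range u) := by
  by_contra h0
  obtain ⟨f, c, hf0, hfb⟩ := geometric_hahn_banach_point_closed
    (convex_convexHull ℝ _) ((Set.finite_range u).isClosed_convexHull ℝ) h0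
  rw [map_zero] at hf0
  set W : E3 := (InnerProductSpace.toDual ℝ E3).symm f with hW
  have hinner : ∀ j : Fin n, ⟪u j, W⟫ = f (u j) := fun j => by
    rw [real_inner_comm, hW, InnerProductSpace.toDual_symm_apply]
  have hWne : W ≠ 0 := by
    intro h
    have i0 : Fin n := ⟨0, by omega⟩
    have h1 : c < f (u i0) := hfb _ (subset_convexHull ℝ _ (Set.mem_range_self i0))
    have h2 : ⟪u i0, W⟫ = 0 := by rw [h, inner_zero_right]
    rw [hinner i0] at h2
    linarith
  obtain ⟨i, hi⟩ := hbal W hWne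
  have h1 : c < f (u i) := hfb _ (subset_convexHull ℝ _ (Set.mem_range_self i))
  rw [hinner i] at hi
  linarith

lemma strict_sep (hn : 5 ≤ n) (u : Fin n → E3) (hinj : Function.Injective u)
    (hsph : ∀ i, ‖u i‖ = 1) (hgp : GeneralPosition u)
    (i : Fin n) (w : E3) (hw0 : w ≠ 0)
    (hw : ∀ j, j ≠ i → 0 ≤ ⟪u j, w⟫) : ∃ W : E3, ∀ j, j ≠ i → 0 < ⟪u j, W⟫ := by
  classical
  have h0 : (0 : E3) ∉ convexHull ℝ (u '' {j | j ≠ i}) := by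
    intro hmem
    obtain ⟨ι, hF, z, wt, hrange, hai, hpos, hone, hsum⟩ :=
      eq_pos_convex_span_of_mem_convexHull hmem
    letI := hF
    have hch : ∀ a : ι, ∃ j : Fin n, j ≠ i ∧ u j = z a := by
      intro a
      obtain ⟨j, hj, hju⟩ := hrange (Set.mem_range_self a)
      exact ⟨j, hj, hju⟩
    choose q hqne hqu using hch
    have hqinj : Function.Injective q := fun a b hab =>
      hai.injective (by rw [← hqu, ← hqu, hab])
    refine coreW hn u hinj hsph hgp q hqinj wt hpos ?_ hone w hw0
      (fun a => hw _ (hqne a))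
    simp only [hqu]
    exact hsum
  obtain ⟨f, c, hf0, hfb⟩ := geometric_hahn_banach_point_closed
    (convex_convexHull ℝ _) (((Set.toFinite _).image u).isClosed_convexHull ℝ) h0
  rw [map_zero] at hf0
  refine ⟨(InnerProductSpace.toDual ℝ E3).symm f, fun j hj => ?_⟩
  have h1 : c < f (u j) :=
    hfb _ (subset_convexHull ℝ _ ⟨j, hj, rfl⟩)
  rw [real_inner_comm, InnerProductSpace.toDual_symm_apply]
  linarith
end Core

end AuxProof

/-- For a set of n ≥ 5 points of S² in general position and not
contained in any closed hemisphere, at least n − 3 of the points can be removed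
individually so that the remaining points are still not contained in any closed
hemisphere. -/
theorem stmt_8 {n : ℕ} (hn : 5 ≤ n) (u : Fin n → E3)
    (hinj : Function.Injective u)
    (hsph : ∀ i, ‖u i‖ = 1)
    (hgp : GeneralPosition u)
    (hbal : IsBalanced u) :
    n - 3 ≤ {i : Fin n | IsBalanced (fun j : {j : Fin n // j ≠ i} => u j)}.ncard := by
  classical
  obtain ⟨ι, hF, z, wt, hrange, hai, hpos, hone, hsum⟩ :=
    eq_pos_convex_span_of_mem_convexHull (zero_mem_hull hn u hbal)
  letI := hF
  choose q hqu using fun a : ι => hrange (Set.mem_range_self a)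
  have hqinj : Function.Injective q := fun a b hab =>
    hai.injective (by rw [← hqu, ← hqu, hab])
  have hsum' : ∑ a, wt a • u (q a) = 0 := by simp only [hqu]; exact hsum
  have hcard_le : Fintype.card ι ≤ 4 := by
    have h1 := hai.card_le_finrank_succ
    have h2 : Module.finrank ℝ (vectorSpan ℝ (Set.range z)) ≤ 3 := by
      have h3 := Submodule.finrank_le (vectorSpan ℝ (Set.range z))
      rwa [finrank_euclideanSpace_fin] at h3
    omega
  have hcard_gt : ¬ Fintype.card ι ≤ 2 := fun h =>
    coreSmall hn u hinj hsph hgp q hqinj wt hpos hsum' hone h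
  have hcard_ne3 : Fintype.card ι ≠ 3 := by
    intro h3
    have e := (Fintype.equivFinOfCardEq h3).symm
    have hs : ∑ a : Fin 3, wt (e a) • u (q (e a)) = 0 := by
      rw [Equiv.sum_comp e (fun i => wt i • u (q i))]; exact hsum'
    rw [Fin.sum_univ_three] at hs
    refine hgp (q (e 0)) (q (e 1)) (q (e 2))
      (fun h => (by decide : ¬((0:Fin 3) = 1)) (e.injective (hqinj h)))
      (fun h => (by decide : ¬((0:Fin 3) = 2)) (e.injective (hqinj h)))
      (fun h => (by decide : ¬((1:Fin 3) = 2)) (e.injective (hqinj h))) ?_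
    exact det3_eq_zero_of_comb _ _ _ (fun a => wt (e a))
      (fun hc => (hpos (e 0)).ne' (congrFun hc 0)) hs
  have hcard4 : Fintype.card ι = 4 := by omega
  have e := (Fintype.equivFinOfCardEq hcard4).symm
  set p : Fin 4 → Fin n := fun a => q (e a) with hp
  have hpinj : Function.Injective p := fun a b h => e.injective (hqinj h)
  set lam : Fin 4 → ℝ := fun a => wt (e a) with hlam
  have hlpos : ∀ a, 0 < lam a := fun a => hpos (e a)
  have hzsum : ∑ a : Fin 4, lam a • u (p a) = 0 := by
    rw [hlam, hp, Equiv.sum_comp e (fun i => wt i • u (q i))]; exact hsum'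
  have hzero : lam 0 • u (p 0) + lam 1 • u (p 1) + lam 2 • u (p 2) + lam 3 • u (p 3) = 0 := by
    have h := hzsum
    rw [Fin.sum_univ_four] at h
    exact h
  have honep : ∑ a : Fin 4, lam a = 1 := by
    rw [hlam, Equiv.sum_comp e wt]; exact hone
  set P : Fin n → Prop := fun i => IsBalanced (fun j : {j : Fin n // j ≠ i} => u j) with hP
  have claimB : ∀ i : Fin n, ¬ P i → ∃ a : Fin 4, i = p a := by
    intro i hb
    by_contra hnot
    push_neg at hnot
    simp only [hP, IsBalanced] at hb
    push_neg at hb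
    obtain ⟨w, hw0, hww⟩ := hb
    exact coreW hn u hinj hsph hgp p hpinj lam hlpos hzsum honep w hw0
      (fun a => hww ⟨p a, fun h => hnot a h.symm⟩)
  have claimC : ∃ a : Fin 4, P (p a) := by
    by_contra hall
    push_neg at hall
    have hwit : ∀ a : Fin 4, ∃ W : E3, ∀ j, j ≠ p a → 0 < ⟪u j, W⟫ := by
      intro a
      have hb := hall a
      simp only [hP, IsBalanced] at hb
      push_neg at hb
      obtain ⟨w, hw0, hww⟩ := hb
      exact strict_sep hn u hinj hsph hgp (p a) w hw0 (fun j hj => hww ⟨j, hj⟩)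
    choose W hW using hwit
    have hq0ex : ∃ k : Fin n, ∀ a, k ≠ p a := by
      by_contra h
      push_neg at h
      have hsurj : Function.Surjective p := fun k => (h k).imp (fun a ha => ha.symm)
      have hle := Fintype.card_le_of_surjective p hsurj
      simp only [Fintype.card_fin] at hle
      omega
    obtain ⟨q0, hq0⟩ := hq0ex
    have hdet : det3 (u (p 0)) (u (p 1)) (u (p 2)) ≠ 0 :=
      hgp _ _ _ (hpinj.ne (by decide)) (hpinj.ne (by decide)) (hpinj.ne (by decide))
    obtain ⟨c, hc⟩ := exists_comb_of_det3_ne_zero _ _ _ hdet (u q0)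
    set A : Fin 4 → ℝ := ![-c 0, -c 1, -c 2, 0] with hA
    have hA0 : A 0 = -c 0 := rfl
    have hA1 : A 1 = -c 1 := rfl
    have hA2 : A 2 = -c 2 := rfl
    have hA3 : A 3 = (0:ℝ) := rfl
    have hAsum : A 0 • u (p 0) + A 1 • u (p 1) + A 2 • u (p 2) + A 3 • u (p 3) = -(u q0) := by
      have hrw : A 0 • u (p 0) + A 1 • u (p 1) + A 2 • u (p 2) + A 3 • u (p 3)
          = -(c 0 • u (p 0) + c 1 • u (p 1) + c 2 • u (p 2)) := by
        rw [hA0, hA1, hA2, hA3]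
        module
      rw [hrw, hc]
    obtain ⟨b, _, hbmin⟩ := Finset.exists_min_image Finset.univ (fun a => A a / lam a)
      ⟨0, Finset.mem_univ 0⟩
    have key : ∀ a : Fin 4, A b * lam a ≤ A a * lam b := by
      intro a
      have h := hbmin a (Finset.mem_univ a)
      exact (div_le_div_iff₀ (hlpos b) (hlpos a)).mp h
    have hzero1 : lam 1 • u (p 1) + lam 0 • u (p 0) + lam 2 • u (p 2) + lam 3 • u (p 3) = 0 := by
      rw [← hzero]; module
    have hzero2 : lam 2 • u (p 2) + lam 0 • u (p 0) + lam 1 • u (p 1) + lam 3 • u (p 3) = 0 := by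
      rw [← hzero]; module
    have hzero3 : lam 3 • u (p 3) + lam 0 • u (p 0) + lam 1 • u (p 1) + lam 2 • u (p 2) = 0 := by
      rw [← hzero]; module
    have hAsum1 : A 1 • u (p 1) + A 0 • u (p 0) + A 2 • u (p 2) + A 3 • u (p 3) = -(u q0) := by
      rw [← hAsum]; module
    have hAsum2 : A 2 • u (p 2) + A 0 • u (p 0) + A 1 • u (p 1) + A 3 • u (p 3) = -(u q0) := by
      rw [← hAsum]; module
    have hAsum3 : A 3 • u (p 3) + A 0 • u (p 0) + A 1 • u (p 1) + A 2 • u (p 2) = -(u q0) := by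
      rw [← hAsum]; module
    fin_cases b
    · exact colContra (u (p 0)) (u (p 1)) (u (p 2)) (u (p 3)) (u q0) (W 0)
        (lam 0) (lam 1) (lam 2) (lam 3) (A 0) (A 1) (A 2) (A 3)
        (hlpos 0) (hlpos 1) (hlpos 2) (hlpos 3) (key 1) (key 2) (key 3)
        hAsum hzero
        (hW 0 _ (hpinj.ne (by decide))) (hW 0 _ (hpinj.ne (by decide)))
        (hW 0 _ (hpinj.ne (by decide))) (hW 0 q0 (hq0 0))
    · exact colContra (u (p 1)) (u (p 0)) (u (p 2)) (u (p 3)) (u q0) (W 1)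
        (lam 1) (lam 0) (lam 2) (lam 3) (A 1) (A 0) (A 2) (A 3)
        (hlpos 1) (hlpos 0) (hlpos 2) (hlpos 3) (key 0) (key 2) (key 3)
        hAsum1 hzero1
        (hW 1 _ (hpinj.ne (by decide))) (hW 1 _ (hpinj.ne (by decide)))
        (hW 1 _ (hpinj.ne (by decide))) (hW 1 q0 (hq0 1))
    · exact colContra (u (p 2)) (u (p 0)) (u (p 1)) (u (p 3)) (u q0) (W 2)
        (lam 2) (lam 0) (lam 1) (lam 3) (A 2) (A 0) (A 1) (A 3)
        (hlpos 2) (hlpos 0) (hlpos 1) (hlpos 3) (key 0) (key 1) (key 3)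
        hAsum2 hzero2
        (hW 2 _ (hpinj.ne (by decide))) (hW 2 _ (hpinj.ne (by decide)))
        (hW 2 _ (hpinj.ne (by decide))) (hW 2 q0 (hq0 2))
    · exact colContra (u (p 3)) (u (p 0)) (u (p 1)) (u (p 2)) (u q0) (W 3)
        (lam 3) (lam 0) (lam 1) (lam 2) (A 3) (A 0) (A 1) (A 2)
        (hlpos 3) (hlpos 0) (hlpos 1) (hlpos 2) (key 0) (key 1) (key 2)
        hAsum3 hzero3
        (hW 3 _ (hpinj.ne (by decide))) (hW 3 _ (hpinj.ne (by decide)))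
        (hW 3 _ (hpinj.ne (by decide))) (hW 3 q0 (hq0 3))
  obtain ⟨a0, ha0⟩ := claimC
  have hsub : Finset.univ.filter (fun i => ¬ P i) ⊆
      ({p 0, p 1, p 2, p 3} : Finset (Fin n)).erase (p a0) := by
    intro i hi
    rw [Finset.mem_filter] at hi
    obtain ⟨a, ha⟩ := claimB i hi.2
    rw [Finset.mem_erase]
    refine ⟨fun h => hi.2 (h ▸ ha0), ?_⟩
    rw [ha]
    fin_cases a <;> simp
  have hcard3 : (Finset.univ.filter (fun i => ¬ P i)).card ≤ 3 := by
    refine le_trans (Finset.card_le_card hsub) ?_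
    rw [Finset.card_erase_of_mem (by fin_cases a0 <;> simp)]
    have h4 : ({p 0, p 1, p 2, p 3} : Finset (Fin n)).card ≤ 4 := by
      apply le_trans (Finset.card_insert_le _ _)
      have := Finset.card_insert_le (p 1) ({p 2, p 3} : Finset (Fin n))
      have := Finset.card_insert_le (p 2) ({p 3} : Finset (Fin n))
      simp only [Finset.card_singleton] at *
      omega
    omega
  have hset : {i : Fin n | P i} = ↑(Finset.univ.filter P) := by
    ext i; simp [hP]
  rw [show {i : Fin n | IsBalanced (fun j : {j : Fin n // j ≠ i} => u j)} = {i : Fin n | P i} from rfl,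
    hset, Set.ncard_coe_finset]
  have hcount := Finset.card_filter_add_card_filter_not (s := (Finset.univ : Finset (Fin n))) (p := P)
  simp only [Finset.card_univ, Fintype.card_fin] at hcount
  omega
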